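/- Let Θ_i, Θ_j, Θ_k ∈ [0, π) with cos Θ_i + cos Θ_j cos Θ_k ≥ 0 cyclically (all three inequalities). For positive reals r_i, r_j, r_k set a_η = cosh r_η, x_η = sinh r_η, I_η = cos Θ_η. Then (cosh l_i cosh l_j - cosh l_k)² < sinh² l_i · sinh² l_j, where cosh l_i = a_j a_k + I_i x_j x_k etc. -/
import Mathlib
set_option maxHeartbeats 1000000


open Real

theorem cosh_triangle_ineq_squared
    (Θi Θj Θk : ℝ)
    (hi : Θi ∈ Set.Ico 0 π) (hj : Θj ∈ Set.Ico 0 π) (hk : Θk ∈ Set.Ico 0 π)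
    (hγi : 0 ≤ Real.cos Θi + Real.cos Θj * Real.cos Θk)
    (hγj : 0 ≤ Real.cos Θj + Real.cos Θk * Real.cos Θi)
    (hγk : 0 ≤ Real.cos Θk + Real.cos Θi * Real.cos Θj)
    (ri rj rk : ℝ) (hri : 0 < ri) (hrj : 0 < rj) (hrk : 0 < rk)
    (li lj lk : ℝ)
    (hcoshi : Real.cosh li = Real.cosh rj * Real.cosh rk + Real.cos Θi * Real.sinh rj * Real.sinh rk)
    (hcoshj : Real.cosh lj = Real.cosh rk * Real.cosh ri + Real.cos Θj * Real.sinh rk * Real.sinh ri)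
    (hcoshk : Real.cosh lk = Real.cosh ri * Real.cosh rj + Real.cos Θk * Real.sinh ri * Real.sinh rj) :
    (Real.cosh li * Real.cosh lj - Real.cosh lk) ^ 2
      < Real.sinh li ^ 2 * Real.sinh lj ^ 2 := by
  set ai := Real.cosh ri with hai
  set aj := Real.cosh rj with haj
  set ak := Real.cosh rk with hak
  set xi := Real.sinh ri with hxi
  set xj := Real.sinh rj with hxj
  set xk := Real.sinh rk with hxk
  set Ci := Real.cos Θi with hCi
  set Cj := Real.cos Θj with hCj
  set Ck := Real.cos Θk with hCk
  have hxip : 0 < xi := Real.sinh_pos_iff.mpr hri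
  have hxjp : 0 < xj := Real.sinh_pos_iff.mpr hrj
  have hxkp : 0 < xk := Real.sinh_pos_iff.mpr hrk
  have haip : 0 < ai := Real.cosh_pos _
  have hajp : 0 < aj := Real.cosh_pos _
  have hakp : 0 < ak := Real.cosh_pos _
  have h2i : ai ^ 2 - xi ^ 2 = 1 := Real.cosh_sq_sub_sinh_sq ri
  have h2j : aj ^ 2 - xj ^ 2 = 1 := Real.cosh_sq_sub_sinh_sq rj
  have h2k : ak ^ 2 - xk ^ 2 = 1 := Real.cosh_sq_sub_sinh_sq rk
  have hCi1 : Ci ≤ 1 := Real.cos_le_one Θi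
  have hCj1 : Cj ≤ 1 := Real.cos_le_one Θj
  have hCk1 : Ck ≤ 1 := Real.cos_le_one Θk
  have hCin : -1 < Ci := by
    have := Real.cos_lt_cos_of_nonneg_of_le_pi hi.1 le_rfl hi.2
    simpa [Real.cos_pi] using this
  have hCjn : -1 < Cj := by
    have := Real.cos_lt_cos_of_nonneg_of_le_pi hj.1 le_rfl hj.2
    simpa [Real.cos_pi] using this
  have hCkn : -1 < Ck := by
    have := Real.cos_lt_cos_of_nonneg_of_le_pi hk.1 le_rfl hk.2
    simpa [Real.cos_pi] using this
  have hCi2 : Ci ^ 2 ≤ 1 := Real.cos_sq_le_one Θi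
  have hCj2 : Cj ^ 2 ≤ 1 := Real.cos_sq_le_one Θj
  have hCk2 : Ck ^ 2 ≤ 1 := Real.cos_sq_le_one Θk
  -- 1 + Cj*Ck > 0
  have hjk : 0 < 1 + Cj * Ck := by nlinarith [mul_pos (by linarith : (0:ℝ) < 1 + Cj) (by linarith : (0:ℝ) < 1 + Ck), mul_nonneg (by linarith : (0:ℝ) ≤ 1 - Cj) (by linarith : (0:ℝ) ≤ 1 - Ck)]
  have hprod : 0 < 1 + Ci * Cj * Ck := by
    nlinarith [mul_pos (by linarith : (0:ℝ) < 1 + Ci) hjk,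
      mul_nonneg (by linarith : (0:ℝ) ≤ 1 - Ci) (by nlinarith [mul_nonneg (by linarith : (0:ℝ) ≤ 1 - Cj) (by linarith : (0:ℝ) ≤ 1 + Ck), mul_nonneg (by linarith : (0:ℝ) ≤ 1 + Cj) (by linarith : (0:ℝ) ≤ 1 - Ck)] : (0:ℝ) ≤ 1 - Cj * Ck)]
  have hsli : Real.sinh li ^ 2 = Real.cosh li ^ 2 - 1 := by
    have := Real.cosh_sq_sub_sinh_sq li; linarith
  have hslj : Real.sinh lj ^ 2 = Real.cosh lj ^ 2 - 1 := by
    have := Real.cosh_sq_sub_sinh_sq lj; linarith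
  have key : Real.sinh li ^ 2 * Real.sinh lj ^ 2
      - (Real.cosh li * Real.cosh lj - Real.cosh lk) ^ 2
      = xj ^ 2 * xk ^ 2 * (1 - Ci ^ 2) + xi ^ 2 * xk ^ 2 * (1 - Cj ^ 2)
        + xi ^ 2 * xj ^ 2 * (1 - Ck ^ 2)
        + 2 * (xi ^ 2 * xj ^ 2 * xk ^ 2) * (1 + Ci * Cj * Ck)
        + 2 * (aj * ak * xi ^ 2 * xj * xk) * (Ci + Cj * Ck)
        + 2 * (ai * ak * xi * xj ^ 2 * xk) * (Cj + Ci * Ck)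
        + 2 * (ai * aj * xi * xj * xk ^ 2) * (Ck + Ci * Cj) := by
    rw [hsli, hslj, hcoshi, hcoshj, hcoshk]
    linear_combination (-ak^2 + 2*aj*ak*xj*xk*Ci - aj^2 + 2*aj^2*ak^2) * h2i
      + (-1 - xi^2 + ak^2 + 2*ak^2*xi^2 + 2*ai*ak*xi*xk*Cj) * h2j
      + (xj^2 + xi^2 + 2*xi^2*xj^2 + 2*ai*aj*xi*xj*Ck) * h2k
  have t1 : 0 ≤ xj ^ 2 * xk ^ 2 * (1 - Ci ^ 2) :=
    mul_nonneg (by positivity) (by linarith)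
  have t2 : 0 ≤ xi ^ 2 * xk ^ 2 * (1 - Cj ^ 2) :=
    mul_nonneg (by positivity) (by linarith)
  have t3 : 0 ≤ xi ^ 2 * xj ^ 2 * (1 - Ck ^ 2) :=
    mul_nonneg (by positivity) (by linarith)
  have t4 : 0 < 2 * (xi ^ 2 * xj ^ 2 * xk ^ 2) * (1 + Ci * Cj * Ck) := by positivity
  have t5 : 0 ≤ 2 * (aj * ak * xi ^ 2 * xj * xk) * (Ci + Cj * Ck) := by
    apply mul_nonneg _ hγi; positivity
  have t6 : 0 ≤ 2 * (ai * ak * xi * xj ^ 2 * xk) * (Cj + Ci * Ck) := by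
    apply mul_nonneg _ (by linarith : (0:ℝ) ≤ Cj + Ci * Ck); positivity
  have t7 : 0 ≤ 2 * (ai * aj * xi * xj * xk ^ 2) * (Ck + Ci * Cj) := by
    apply mul_nonneg _ hγk; positivity
  linarith [key, t1, t2, t3, t4, t5, t6, t7]
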